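/- For every finite tree T with ℓ leaves, the 2-colour discrepancy of the family of all subtrees of T equals ⌈ℓ/2⌉. -/

import Mathlib

namespace TwoColourDiscrAux
open SimpleGraph Finset

variable {V : Type*} [Fintype V] [DecidableEq V] {T : SimpleGraph V}

/-- Data of a rooted tree structure on `T`. -/
structure Rooted (T : SimpleGraph V) where
  r : V
  par : V → V
  dep : V → ℕ
  dep_r : dep r = 0
  adj_par : ∀ v, v ≠ r → T.Adj v (par v)
  dep_par : ∀ v, v ≠ r → dep (par v) + 1 = dep v
  adj_iff : ∀ u v, T.Adj u v → (u ≠ r ∧ par u = v) ∨ (v ≠ r ∧ par v = u)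
  dep_lt : ∀ v, dep v < Fintype.card V

theorem exists_rooted [DecidableRel T.Adj] (hT : T.IsTree) (r : V) :
    ∃ R : Rooted T, R.r = r := by
  have hc : T.Connected := hT.isConnected
  have hstep : ∀ v : V, v ≠ r → ∃ u, T.Adj v u ∧ T.dist r u + 1 = T.dist r v := by
    intro v hv
    obtain ⟨W, hW⟩ := (hc v r).exists_walk_length_eq_dist
    cases W with
    | nil => exact absurd rfl hv
    | cons h W' =>
        rename_i u
        refine ⟨u, h, ?_⟩
        have h1 : T.dist u r ≤ W'.length := T.dist_le _
        have h2 : W'.length + 1 = T.dist v r := by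
          simpa using hW
        have h3 : T.dist r v ≤ T.dist r u + 1 := by
          calc T.dist r v ≤ T.dist r u + T.dist u v := hc.dist_triangle
          _ ≤ T.dist r u + 1 := by
              have : T.dist u v ≤ 1 := by
                simpa using T.dist_le (SimpleGraph.Walk.cons h.symm SimpleGraph.Walk.nil)
              omega
        have h4 : T.dist u r = T.dist r u := T.dist_comm
        have h5 : T.dist v r = T.dist r v := T.dist_comm
        omega
  classical
  let par : V → V := fun v => if h : v ≠ r then Classical.choose (hstep v h) else r
  have hpar : ∀ v (h : v ≠ r), T.Adj v (par v) ∧ T.dist r (par v) + 1 = T.dist r v := by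
    intro v h
    simp only [par, dif_pos h]
    exact Classical.choose_spec (hstep v h)
  have hdeplt : ∀ v, T.dist r v < Fintype.card V := by
    intro v
    obtain ⟨W, hW⟩ := (hc r v).exists_walk_length_eq_dist
    have h1 : T.dist r v ≤ W.bypass.length := T.dist_le _
    have h2 := W.bypass_isPath.length_lt
    omega
  -- injectivity of parent edges
  have hinj : Set.InjOn (fun v => s(v, par v)) (↑(univ.erase r) : Set V) := by
    intro u hu v hv huv
    simp only [coe_erase, Set.mem_diff] at hu hv
    have hu' : u ≠ r := by simpa using hu.2
    have hv' : v ≠ r := by simpa using hv.2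
    simp only [Sym2.eq, Sym2.rel_iff', Prod.mk.injEq, Prod.swap_prod_mk] at huv
    rcases huv with ⟨h1, h2⟩ | ⟨h1, h2⟩
    · exact h1
    · exfalso
      have e1 := (hpar u hu').2
      have e2 := (hpar v hv').2
      rw [h2] at e1
      rw [← h1] at e2
      omega
  have hcardE : (univ.erase r).card = (T.edgeFinset).card := by
    have := hT.card_edgeFinset
    rw [card_erase_of_mem (mem_univ r), card_univ]
    omega
  have hsub : (univ.erase r).image (fun v => s(v, par v)) ⊆ T.edgeFinset := by
    intro e he
    simp only [mem_image] at he
    obtain ⟨v, hv, rfl⟩ := he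
    have hv' : v ≠ r := by simpa using (mem_erase.mp hv).1
    simpa [SimpleGraph.mem_edgeFinset] using (hpar v hv').1
  have himg : (univ.erase r).image (fun v => s(v, par v)) = T.edgeFinset := by
    apply eq_of_subset_of_card_le hsub
    rw [Finset.card_image_of_injOn hinj, hcardE]
  refine ⟨⟨r, par, fun v => T.dist r v, by simp, fun v h => (hpar v h).1,
    fun v h => (hpar v h).2, ?_, hdeplt⟩, rfl⟩
  intro u v huv
  have he : s(u, v) ∈ T.edgeFinset := by simpa [SimpleGraph.mem_edgeFinset] using huv
  rw [← himg] at he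
  simp only [mem_image] at he
  obtain ⟨x, hx, hxe⟩ := he
  have hx' : x ≠ r := by simpa using (mem_erase.mp hx).1
  simp only [Sym2.eq, Sym2.rel_iff', Prod.mk.injEq, Prod.swap_prod_mk] at hxe
  rcases hxe with ⟨h1, h2⟩ | ⟨h1, h2⟩
  · subst h1; exact Or.inl ⟨hx', h2⟩
  · subst h1; exact Or.inr ⟨hx', h2⟩

end TwoColourDiscrAux
namespace TwoColourDiscrAux
namespace Rooted
set_option linter.unusedSectionVars false
open SimpleGraph Finset

variable {V : Type*} [Fintype V] [DecidableEq V] {T : SimpleGraph V} (R : Rooted T)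

lemma dep_pos {v : V} (h : v ≠ R.r) : 1 ≤ R.dep v := by
  have := R.dep_par v h; omega

lemma eq_root_of_dep_eq_zero {v : V} (h : R.dep v = 0) : v = R.r := by
  by_contra hv
  have := R.dep_pos hv; omega

/-- children of `v` -/
def C (v : V) : Finset V := univ.filter fun u => u ≠ R.r ∧ R.par u = v

lemma mem_C {u v : V} : u ∈ R.C v ↔ u ≠ R.r ∧ R.par u = v := by
  simp [C]

lemma dep_of_mem_C {u v : V} (h : u ∈ R.C v) : R.dep u = R.dep v + 1 := by
  rw [mem_C] at h
  have := R.dep_par u h.1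
  rw [h.2] at this; omega

/-- `u` is a descendant of `x` (possibly equal). -/
def Desc (x u : V) : Prop := R.dep x ≤ R.dep u ∧ R.par^[R.dep u - R.dep x] u = x

instance : ∀ x u, Decidable (R.Desc x u) := fun x u => by unfold Desc; infer_instance

lemma desc_refl (x : V) : R.Desc x x := ⟨le_refl _, by simp⟩

lemma desc_dep_le {x u : V} (h : R.Desc x u) : R.dep x ≤ R.dep u := h.1

lemma eq_of_desc_of_dep_le {x u : V} (h : R.Desc x u) (h2 : R.dep u ≤ R.dep x) : u = x := by
  have h0 : R.dep u - R.dep x = 0 := by omega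
  have := h.2; rw [h0] at this; simpa using this

lemma desc_par {x u : V} (h : R.Desc x u) (hne : u ≠ x) :
    R.Desc x (R.par u) ∧ R.dep x < R.dep u := by
  have hlt : R.dep x < R.dep u := by
    rcases Nat.lt_or_ge (R.dep x) (R.dep u) with h' | h'
    · exact h'
    · exact absurd (R.eq_of_desc_of_dep_le h h') hne
  have hur : u ≠ R.r := by
    intro h0; rw [h0, R.dep_r] at hlt; omega
  have hdp := R.dep_par u hur
  have hk : R.dep u - R.dep x = (R.dep (R.par u) - R.dep x) + 1 := by omega
  have := h.2
  rw [hk, Function.iterate_succ_apply] at this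
  exact ⟨⟨by omega, this⟩, hlt⟩

lemma desc_cons {x u : V} (h : R.Desc x (R.par u)) (hur : u ≠ R.r) : R.Desc x u := by
  have hdp := R.dep_par u hur
  have h1 := h.1
  refine ⟨by omega, ?_⟩
  have hk : R.dep u - R.dep x = (R.dep (R.par u) - R.dep x) + 1 := by omega
  rw [hk, Function.iterate_succ_apply]
  exact h.2

lemma desc_unique {c c' u : V} (h : R.Desc c u) (h' : R.Desc c' u)
    (hd : R.dep c = R.dep c') : c = c' := by
  have e1 := h.2
  have e2 := h'.2
  rw [show R.dep u - R.dep c = R.dep u - R.dep c' by omega] at e1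
  exact e1.symm.trans e2

lemma desc_trans {x y u : V} (h1 : R.Desc x y) (h2 : R.Desc y u) : R.Desc x u := by
  refine ⟨le_trans h1.1 h2.1, ?_⟩
  have hk : R.dep u - R.dep x = (R.dep y - R.dep x) + (R.dep u - R.dep y) := by
    have := h1.1; have := h2.1; omega
  rw [hk, Function.iterate_add_apply, h2.2, h1.2]

lemma desc_child_extend {c v u : V} (hc : c ∈ R.C v) (h : R.Desc c u) : R.Desc v u := by
  rw [mem_C] at hc
  refine R.desc_trans ⟨?_, ?_⟩ h
  · have := R.dep_par c hc.1; rw [hc.2] at this; omega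
  · have := R.dep_par c hc.1
    rw [hc.2] at this
    rw [show R.dep c - R.dep v = 1 by omega]
    simp [hc.2]

/-- `A` is the vertex set of a subtree of the rooted tree, rooted at `v`. -/
def Good (v : V) (A : Finset V) : Prop :=
  v ∈ A ∧ ∀ u ∈ A, u ≠ v → R.par u ∈ A ∧ R.dep v < R.dep u

lemma good_chain {v : V} {A : Finset V} (hg : R.Good v A) :
    ∀ u ∈ A, R.Desc v u := by
  suffices h : ∀ n, ∀ u ∈ A, R.dep u = n → R.Desc v u by
    intro u hu; exact h (R.dep u) u hu rfl
  intro n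
  induction n using Nat.strong_induction_on with
  | _ n IH =>
    intro u hu hdep
    by_cases he : u = v
    · subst he; exact R.desc_refl u
    · obtain ⟨hpA, hlt⟩ := hg.2 u hu he
      have hur : u ≠ R.r := by
        intro h0; rw [h0, R.dep_r] at hlt; omega
      have hdp := R.dep_par u hur
      have := IH (R.dep (R.par u)) (by omega) (R.par u) hpA rfl
      exact R.desc_cons this hur

/-- the child of `v` through which the chain of `u` passes, together with its properties -/
lemma exists_child_desc {v : V} {A : Finset V} (hg : R.Good v A) :
    ∀ u ∈ A, u ≠ v → ∃ c, c ∈ R.C v ∧ c ∈ A ∧ R.Desc c u := by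
  suffices h : ∀ n, ∀ u ∈ A, u ≠ v → R.dep u = n → ∃ c, c ∈ R.C v ∧ c ∈ A ∧ R.Desc c u by
    intro u hu hne; exact h (R.dep u) u hu hne rfl
  intro n
  induction n using Nat.strong_induction_on with
  | _ n IH =>
    intro u hu hne hdep
    obtain ⟨hpA, hlt⟩ := hg.2 u hu hne
    have hur : u ≠ R.r := by
      intro h0; rw [h0, R.dep_r] at hlt; omega
    have hdp := R.dep_par u hur
    by_cases hp : R.par u = v
    · exact ⟨u, R.mem_C.mpr ⟨hur, hp⟩, hu, R.desc_refl u⟩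
    · obtain ⟨c, hc1, hc2, hc3⟩ := IH (R.dep (R.par u)) (by omega) (R.par u) hpA hp rfl
      exact ⟨c, hc1, hc2, R.desc_cons hc3 hur⟩

end Rooted
end TwoColourDiscrAux
namespace TwoColourDiscrAux
namespace Rooted
set_option linter.unusedSectionVars false
open SimpleGraph Finset

variable {V : Type*} [Fintype V] [DecidableEq V] {T : SimpleGraph V} (R : Rooted T)

/-- the part of `A` consisting of descendants of `c` -/
def part (A : Finset V) (c : V) : Finset V := A.filter (fun u => R.Desc c u)

lemma mem_part {A : Finset V} {c u : V} : u ∈ R.part A c ↔ u ∈ A ∧ R.Desc c u := by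
  simp [part]

lemma good_part {v c : V} {A : Finset V} (hg : R.Good v A) (hc : c ∈ R.C v) (hcA : c ∈ A) :
    R.Good c (R.part A c) := by
  constructor
  · exact R.mem_part.mpr ⟨hcA, R.desc_refl c⟩
  · intro u hu hne
    rw [mem_part] at hu
    obtain ⟨huA, hdesc⟩ := hu
    have hdc := R.dep_of_mem_C hc
    have hdlt : R.dep c < R.dep u := (R.desc_par hdesc hne).2
    have hnev : u ≠ v := by
      intro h0; subst h0; omega
    obtain ⟨hpA, _⟩ := hg.2 u huA hnev
    exact ⟨R.mem_part.mpr ⟨hpA, (R.desc_par hdesc hne).1⟩, hdlt⟩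

lemma part_disjoint {c c' : V} {A : Finset V} (hd : R.dep c = R.dep c') (hne : c ≠ c') :
    Disjoint (R.part A c) (R.part A c') := by
  rw [Finset.disjoint_left]
  intro u hu hu'
  rw [mem_part] at hu hu'
  exact hne (R.desc_unique hu.2 hu'.2 hd)

lemma erase_eq_biUnion {v : V} {A : Finset V} (hg : R.Good v A) :
    A.erase v = ((R.C v) ∩ A).biUnion (fun c => R.part A c) := by
  ext u
  simp only [mem_erase, mem_biUnion, mem_inter]
  constructor
  · rintro ⟨hne, huA⟩
    obtain ⟨c, hc1, hc2, hc3⟩ := R.exists_child_desc hg u huA hne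
    exact ⟨c, ⟨hc1, hc2⟩, R.mem_part.mpr ⟨huA, hc3⟩⟩
  · rintro ⟨c, ⟨hc1, hc2⟩, hu⟩
    rw [mem_part] at hu
    have hdc := R.dep_of_mem_C hc1
    have hdl := hu.2.1
    have hdv : R.dep v < R.dep u := by
      have := (R.good_chain hg c hc2)
      omega
    refine ⟨?_, hu.1⟩
    intro h0; subst h0; omega

lemma sum_split {v : V} {A : Finset V} (hg : R.Good v A) (w : V → ℤ) :
    ∑ u ∈ A.erase v, w u = ∑ c ∈ (R.C v) ∩ A, (w c + ∑ u ∈ (R.part A c).erase c, w u) := by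
  rw [R.erase_eq_biUnion hg, Finset.sum_biUnion]
  · apply Finset.sum_congr rfl
    intro c hc
    rw [mem_inter] at hc
    have hcmem : c ∈ R.part A c := R.mem_part.mpr ⟨hc.2, R.desc_refl c⟩
    rw [← Finset.add_sum_erase _ w hcmem]
  · intro c hc c' hc' hne
    simp only [Finset.coe_inter, Set.mem_inter_iff, Finset.mem_coe] at hc hc'
    exact R.part_disjoint (by rw [R.dep_of_mem_C hc.1, R.dep_of_mem_C hc'.1]) hne

section Degree
variable [DecidableRel T.Adj]

lemma neighborFinset_root : T.neighborFinset R.r = R.C R.r := by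
  ext u
  simp only [mem_neighborFinset, mem_C]
  constructor
  · intro h
    rcases R.adj_iff _ _ h with ⟨h1, h2⟩ | ⟨h1, h2⟩
    · exact absurd rfl h1
    · exact ⟨h1, h2⟩
  · rintro ⟨h1, h2⟩
    exact (h2 ▸ R.adj_par u h1).symm

lemma neighborFinset_nonroot {v : V} (hv : v ≠ R.r) :
    T.neighborFinset v = insert (R.par v) (R.C v) := by
  ext u
  simp only [mem_neighborFinset, mem_insert, mem_C]
  constructor
  · intro h
    rcases R.adj_iff _ _ h with ⟨h1, h2⟩ | ⟨h1, h2⟩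
    · exact Or.inl h2.symm
    · exact Or.inr ⟨h1, h2⟩
  · rintro (rfl | ⟨h1, h2⟩)
    · exact (R.adj_par v hv)
    · exact (h2 ▸ R.adj_par u h1).symm

lemma par_not_mem_C {v : V} (hv : v ≠ R.r) : R.par v ∉ R.C v := by
  intro h
  have h1 := R.dep_of_mem_C h
  have h2 := R.dep_par v hv
  omega

lemma degree_root : T.degree R.r = (R.C R.r).card := by
  rw [← card_neighborFinset_eq_degree, R.neighborFinset_root]

lemma degree_nonroot {v : V} (hv : v ≠ R.r) : T.degree v = (R.C v).card + 1 := by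
  rw [← card_neighborFinset_eq_degree, R.neighborFinset_nonroot hv,
    Finset.card_insert_of_notMem (R.par_not_mem_C hv)]

/-- A vertex of maximal depth distinct from the root is a leaf. -/
lemma exists_leaf (h2 : 2 ≤ Fintype.card V) : ∃ v, v ≠ R.r ∧ T.degree v = 1 := by
  obtain ⟨v, -, hv⟩ := Finset.exists_max_image (univ : Finset V) R.dep ⟨R.r, mem_univ _⟩
  have hvr : v ≠ R.r := by
    intro h0
    obtain ⟨u, hu⟩ := Fintype.exists_ne_of_one_lt_card h2 v
    have h1 : R.dep u ≤ R.dep v := hv u (mem_univ u)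
    have h2' : u ≠ R.r := fun h => hu (h.trans h0.symm)
    have h4 := R.dep_pos h2'
    have h3 : R.dep v = 0 := by rw [h0, R.dep_r]
    omega
  have hC : R.C v = ∅ := by
    rw [Finset.eq_empty_iff_forall_notMem]
    intro c hc
    have := R.dep_of_mem_C hc
    have := hv c (mem_univ c)
    omega
  refine ⟨v, hvr, ?_⟩
  rw [R.degree_nonroot hvr, hC]
  simp

end Degree
end Rooted
end TwoColourDiscrAux
namespace TwoColourDiscrAux
namespace Rooted
set_option linter.unusedSectionVars false
open SimpleGraph Finset

variable {V : Type*} [Fintype V] [DecidableEq V] {T : SimpleGraph V} (R : Rooted T)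

lemma dep_child_lt {c v : V} (hc : c ∈ R.C v) :
    Fintype.card V - R.dep c < Fintype.card V - R.dep v := by
  have h1 := R.dep_of_mem_C hc
  have h2 := R.dep_lt v
  have h3 := R.dep_lt c
  omega

lemma desc_of_mem_C {c v : V} (hc : c ∈ R.C v) : R.Desc v c :=
  R.desc_child_extend hc (R.desc_refl c)

/-- maximal weight of a subtree hanging at `v` (not using the edge above `v`) -/
def gval (w : V → ℤ) (v : V) : ℤ :=
  ∑ c ∈ (R.C v).attach, max 0 (gval w c.1 + w c.1)
termination_by Fintype.card V - R.dep v
decreasing_by exact R.dep_child_lt c.2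

/-- minimal weight of a subtree hanging at `v` -/
def hval (w : V → ℤ) (v : V) : ℤ :=
  ∑ c ∈ (R.C v).attach, min 0 (hval w c.1 + w c.1)
termination_by Fintype.card V - R.dep v
decreasing_by exact R.dep_child_lt c.2

/-- number of leaves of `T` that are descendants of `v` (`v` not the root) -/
def lam (v : V) : ℕ :=
  if (R.C v) = ∅ then 1 else ∑ c ∈ (R.C v).attach, lam c.1
termination_by Fintype.card V - R.dep v
decreasing_by exact R.dep_child_lt c.2

lemma gval_eq (w : V → ℤ) (v : V) :
    R.gval w v = ∑ c ∈ R.C v, max 0 (R.gval w c + w c) := by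
  rw [gval, ← Finset.sum_attach (R.C v) (fun c => max 0 (R.gval w c + w c))]

lemma hval_eq (w : V → ℤ) (v : V) :
    R.hval w v = ∑ c ∈ R.C v, min 0 (R.hval w c + w c) := by
  rw [hval, ← Finset.sum_attach (R.C v) (fun c => min 0 (R.hval w c + w c))]

lemma lam_eq (v : V) :
    R.lam v = if (R.C v) = ∅ then 1 else ∑ c ∈ R.C v, R.lam c := by
  rw [lam, ← Finset.sum_attach (R.C v) (fun c => R.lam c)]

lemma gval_nonneg (w : V → ℤ) (v : V) : 0 ≤ R.gval w v := by
  rw [gval_eq]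
  exact Finset.sum_nonneg fun c _ => le_max_left _ _

lemma hval_nonpos (w : V → ℤ) (v : V) : R.hval w v ≤ 0 := by
  rw [hval_eq]
  exact Finset.sum_nonpos fun c _ => min_le_left _ _

lemma one_le_lam (v : V) : 1 ≤ R.lam v := by
  suffices h : ∀ n v, Fintype.card V - R.dep v = n → 1 ≤ R.lam v by
    exact h _ v rfl
  intro n
  induction n using Nat.strong_induction_on with
  | _ n IH =>
    intro v hn
    rw [lam_eq]
    by_cases hC : R.C v = ∅
    · simp [hC]
    · rw [if_neg hC]
      obtain ⟨c, hc⟩ := Finset.nonempty_iff_ne_empty.mpr hC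
      calc 1 ≤ R.lam c := IH _ (by subst hn; exact R.dep_child_lt hc) c rfl
      _ ≤ ∑ c ∈ R.C v, R.lam c := Finset.single_le_sum (fun _ _ => Nat.zero_le _) hc

lemma gval_neg (w : V → ℤ) (v : V) : R.gval (fun u => -(w u)) v = - R.hval w v := by
  suffices h : ∀ n v, Fintype.card V - R.dep v = n →
      R.gval (fun u => -(w u)) v = - R.hval w v by exact h _ v rfl
  intro n
  induction n using Nat.strong_induction_on with
  | _ n IH =>
    intro v hn
    rw [gval_eq, hval_eq, ← Finset.sum_neg_distrib]
    apply Finset.sum_congr rfl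
    intro c hc
    rw [IH _ (by subst hn; exact R.dep_child_lt hc) c rfl]
    omega

lemma gval_congr (w w' : V → ℤ) (v : V)
    (h : ∀ u, R.Desc v u → u ≠ v → w u = w' u) : R.gval w v = R.gval w' v := by
  suffices hs : ∀ n v, Fintype.card V - R.dep v = n →
      (∀ u, R.Desc v u → u ≠ v → w u = w' u) → R.gval w v = R.gval w' v by
    exact hs _ v rfl h
  intro n
  induction n using Nat.strong_induction_on with
  | _ n IH =>
    intro v hn hagree
    rw [gval_eq, gval_eq]
    apply Finset.sum_congr rfl
    intro c hc
    have hdesc : R.Desc v c := R.desc_of_mem_C hc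
    have hdep : R.dep c = R.dep v + 1 := R.dep_of_mem_C hc
    have hcv : c ≠ v := fun h0 => by rw [h0] at hdep; omega
    rw [IH _ (by subst hn; exact R.dep_child_lt hc) c rfl, hagree c hdesc hcv]
    intro u hu hne
    refine hagree u (R.desc_trans hdesc hu) ?_
    intro h0
    have := hu.1
    rw [h0] at this
    omega

lemma hval_congr (w w' : V → ℤ) (v : V)
    (h : ∀ u, R.Desc v u → u ≠ v → w u = w' u) : R.hval w v = R.hval w' v := by
  have h1 := R.gval_congr (fun u => -(w u)) (fun u => -(w' u)) v (by
    intro u h1 h2; exact congrArg Neg.neg (h u h1 h2))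
  rw [R.gval_neg, R.gval_neg] at h1
  omega

lemma lam_mono {x u : V} (h : R.Desc x u) : R.lam u ≤ R.lam x := by
  suffices hs : ∀ n u, R.dep u = n → R.Desc x u → R.lam u ≤ R.lam x by
    exact hs _ u rfl h
  intro n
  induction n using Nat.strong_induction_on with
  | _ n IH =>
    intro u hn hdesc
    by_cases he : u = x
    · subst he; rfl
    · obtain ⟨hdp, hlt⟩ := R.desc_par hdesc he
      have hur : u ≠ R.r := by
        intro h0; rw [h0, R.dep_r] at hlt; omega
      have hdpar := R.dep_par u hur
      have hmem : u ∈ R.C (R.par u) := R.mem_C.mpr ⟨hur, rfl⟩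
      have h1 : R.lam u ≤ R.lam (R.par u) := by
        rw [R.lam_eq (R.par u), if_neg (Finset.nonempty_iff_ne_empty.mp ⟨u, hmem⟩)]
        exact Finset.single_le_sum (fun _ _ => Nat.zero_le _) hmem
      exact le_trans h1 (IH (R.dep (R.par u)) (by omega) (R.par u) rfl hdp)

end Rooted
end TwoColourDiscrAux
namespace TwoColourDiscrAux
namespace Rooted
set_option linter.unusedSectionVars false
open SimpleGraph Finset

variable {V : Type*} [Fintype V] [DecidableEq V] {T : SimpleGraph V} (R : Rooted T)

lemma gval_of_C_empty (w : V → ℤ) {v : V} (h : R.C v = ∅) : R.gval w v = 0 := by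
  rw [gval_eq, h]; simp

lemma hval_of_C_empty (w : V → ℤ) {v : V} (h : R.C v = ∅) : R.hval w v = 0 := by
  rw [hval_eq, h]; simp

/-- Realization: there is a subtree at `v` achieving `gval`. -/
lemma exists_good_gval (w : V → ℤ) (v : V) :
    ∃ A : Finset V, R.Good v A ∧ ∑ u ∈ A.erase v, w u = R.gval w v := by
  suffices hs : ∀ n v, Fintype.card V - R.dep v = n →
      ∃ A : Finset V, R.Good v A ∧ ∑ u ∈ A.erase v, w u = R.gval w v by
    exact hs _ v rfl
  intro n
  induction n using Nat.strong_induction_on with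
  | _ n IH =>
    intro v hn
    have IHc : ∀ c ∈ R.C v, ∃ A, R.Good c A ∧ ∑ u ∈ A.erase c, w u = R.gval w c := by
      intro c hc
      exact IH _ (by subst hn; exact R.dep_child_lt hc) c rfl
    choose F hF1 hF2 using IHc
    classical
    let F' : V → Finset V := fun c => if h : c ∈ R.C v then F c h else ∅
    let sel : Finset V := (R.C v).filter (fun c => 0 < R.gval w c + w c)
    have hsel : sel ⊆ R.C v := Finset.filter_subset _ _
    have hF'good : ∀ c ∈ R.C v, R.Good c (F' c) ∧ ∑ u ∈ (F' c).erase c, w u = R.gval w c := by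
      intro c hc
      simp only [F', dif_pos hc]
      exact ⟨hF1 c hc, hF2 c hc⟩
    have hdesc : ∀ c ∈ R.C v, ∀ u ∈ F' c, R.Desc c u := by
      intro c hc u hu
      exact R.good_chain (hF'good c hc).1 u hu
    have hdisj : ∀ c ∈ sel, ∀ c' ∈ sel, c ≠ c' → Disjoint (F' c) (F' c') := by
      intro c hc c' hc' hne
      rw [Finset.disjoint_left]
      intro u hu hu'
      exact hne (R.desc_unique (hdesc c (hsel hc) u hu) (hdesc c' (hsel hc') u hu')
        (by rw [R.dep_of_mem_C (hsel hc), R.dep_of_mem_C (hsel hc')]))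
    have hvnot : v ∉ sel.biUnion F' := by
      intro hv
      rw [Finset.mem_biUnion] at hv
      obtain ⟨c, hc, hv⟩ := hv
      have h1 := R.desc_dep_le (hdesc c (hsel hc) v hv)
      have h2 := R.dep_of_mem_C (hsel hc)
      omega
    refine ⟨insert v (sel.biUnion F'), ⟨Finset.mem_insert_self _ _, ?_⟩, ?_⟩
    · intro u hu hne
      rw [Finset.mem_insert] at hu
      rcases hu with rfl | hu
      · exact absurd rfl hne
      rw [Finset.mem_biUnion] at hu
      obtain ⟨c, hc, hu⟩ := hu
      have hcC := hsel hc
      have hdepu : R.dep v < R.dep u := by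
        have h1 := R.desc_dep_le (hdesc c hcC u hu)
        have h2 := R.dep_of_mem_C hcC
        omega
      by_cases huc : u = c
      · subst huc
        refine ⟨?_, hdepu⟩
        rw [(R.mem_C.mp hcC).2]
        exact Finset.mem_insert_self _ _
      · obtain ⟨hpar, _⟩ := (hF'good c hcC).1.2 u hu huc
        exact ⟨Finset.mem_insert_of_mem (Finset.mem_biUnion.mpr ⟨c, hc, hpar⟩), hdepu⟩
    · rw [Finset.erase_insert hvnot, Finset.sum_biUnion]
      · have hterm : ∀ c ∈ sel, ∑ u ∈ F' c, w u = w c + R.gval w c := by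
          intro c hc
          have hcmem : c ∈ F' c := (hF'good c (hsel hc)).1.1
          rw [← Finset.add_sum_erase _ w hcmem, (hF'good c (hsel hc)).2]
        rw [Finset.sum_congr rfl hterm, gval_eq]
        rw [Finset.sum_filter]
        apply Finset.sum_congr rfl
        intro c _
        rcases le_or_gt (R.gval w c + w c) 0 with h | h
        · rw [if_neg (by omega), max_eq_left (by omega)]
        · rw [if_pos h, max_eq_right (by omega)]
          omega
      · exact hdisj
  
lemma exists_good_hval (w : V → ℤ) (v : V) :
    ∃ A : Finset V, R.Good v A ∧ ∑ u ∈ A.erase v, w u = R.hval w v := by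
  obtain ⟨A, hA, hsum⟩ := R.exists_good_gval (fun u => -(w u)) v
  rw [R.gval_neg] at hsum
  refine ⟨A, hA, ?_⟩
  rw [Finset.sum_neg_distrib] at hsum
  omega

/-- Domination: every subtree at `v` has weight at most `gval`. -/
lemma sum_le_gval (w : V → ℤ) {v : V} {A : Finset V} (hg : R.Good v A) :
    ∑ u ∈ A.erase v, w u ≤ R.gval w v := by
  suffices hs : ∀ n v, Fintype.card V - R.dep v = n → ∀ A : Finset V, R.Good v A →
      ∑ u ∈ A.erase v, w u ≤ R.gval w v by
    exact hs _ v rfl A hg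
  intro n
  induction n using Nat.strong_induction_on with
  | _ n IH =>
    intro v hn A hg
    rw [R.sum_split hg, gval_eq]
    calc ∑ c ∈ R.C v ∩ A, (w c + ∑ u ∈ (R.part A c).erase c, w u)
        ≤ ∑ c ∈ R.C v ∩ A, max 0 (R.gval w c + w c) := by
          apply Finset.sum_le_sum
          intro c hc
          rw [Finset.mem_inter] at hc
          have h1 := IH _ (by subst hn; exact R.dep_child_lt hc.1) c rfl _
            (R.good_part hg hc.1 hc.2)
          have h2 : (0:ℤ) ≤ max 0 (R.gval w c + w c) := le_max_left _ _
          have h3 : R.gval w c + w c ≤ max 0 (R.gval w c + w c) := le_max_right _ _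
          omega
      _ ≤ ∑ c ∈ R.C v, max 0 (R.gval w c + w c) := by
          apply Finset.sum_le_sum_of_subset_of_nonneg (Finset.inter_subset_left)
          intro c _ _
          exact le_max_left _ _

lemma hval_le_sum (w : V → ℤ) {v : V} {A : Finset V} (hg : R.Good v A) :
    R.hval w v ≤ ∑ u ∈ A.erase v, w u := by
  have := R.sum_le_gval (fun u => -(w u)) hg
  rw [R.gval_neg, Finset.sum_neg_distrib] at this
  omega

/-- Key inequality for the lower bound. -/
lemma lam_le_gval_sub_hval (w : V → ℤ) (hw : ∀ u, w u = 1 ∨ w u = -1) :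
    ∀ v : V, R.C v ≠ ∅ → (R.lam v : ℤ) ≤ R.gval w v - R.hval w v := by
  suffices hs : ∀ n v, Fintype.card V - R.dep v = n → R.C v ≠ ∅ →
      (R.lam v : ℤ) ≤ R.gval w v - R.hval w v by
    exact fun v => hs _ v rfl
  intro n
  induction n using Nat.strong_induction_on with
  | _ n IH =>
    intro v hn hne
    rw [gval_eq, hval_eq, R.lam_eq, if_neg hne, ← Finset.sum_sub_distrib]
    push_cast
    apply Finset.sum_le_sum
    intro c hc
    by_cases hcc : R.C c = ∅
    · rw [R.gval_of_C_empty w hcc, R.hval_of_C_empty w hcc, R.lam_eq, if_pos hcc]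
      rcases hw c with h | h <;> rw [h] <;> norm_num
    · have h1 := IH _ (by subst hn; exact R.dep_child_lt hc) c rfl hcc
      have h2 : R.gval w c + w c ≤ max 0 (R.gval w c + w c) := le_max_right _ _
      have h3 : min 0 (R.hval w c + w c) ≤ R.hval w c + w c := min_le_right _ _
      omega

end Rooted
end TwoColourDiscrAux
namespace TwoColourDiscrAux
set_option linter.unusedSectionVars false
open SimpleGraph Finset

variable {V : Type*} [Fintype V] [DecidableEq V] {T : SimpleGraph V}

/-- the subtree subgraph on vertex set `A` -/
def sub (T : SimpleGraph V) (A : Finset V) : T.Subgraph where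
  verts := ↑A
  Adj := fun x y => T.Adj x y ∧ x ∈ A ∧ y ∈ A
  adj_sub := fun h => h.1
  edge_vert := fun h => by simpa using h.2.1
  symm := ⟨fun x y h => ⟨h.1.symm, h.2.2, h.2.1⟩⟩

namespace Rooted

variable (R : Rooted T)

lemma parentEdge_inj {u u' : V} (hu : u ≠ R.r) (hu' : u' ≠ R.r)
    (h : s(u, R.par u) = s(u', R.par u')) : u = u' := by
  rw [Sym2.eq, Sym2.rel_iff'] at h
  rcases h with h | h
  · exact (Prod.mk.injEq _ _ _ _ ▸ h).1
  · exfalso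
    have h1 : u = R.par u' := (Prod.mk.injEq _ _ _ _ ▸ h).1
    have h2 : R.par u = u' := ((Prod.mk.injEq _ _ _ _ ▸ h).2 : R.par u = u')
    have e1 := R.dep_par u hu
    have e2 := R.dep_par u' hu'
    rw [h2] at e1
    rw [← h1] at e2
    omega

lemma ne_root_of_good {v : V} {A : Finset V} (hg : R.Good v A) {u : V}
    (hu : u ∈ A) (hne : u ≠ v) : u ≠ R.r := by
  intro h0
  have := (hg.2 u hu hne).2
  rw [h0, R.dep_r] at this
  omega

lemma sub_connected {v : V} {A : Finset V} (hg : R.Good v A) : (sub T A).Connected := by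
  have hreach : ∀ n (u : V) (hu : u ∈ A), R.dep u = n →
      (sub T A).coe.Reachable ⟨u, by simpa [sub] using hu⟩ ⟨v, by simpa [sub] using hg.1⟩ := by
    intro n
    induction n using Nat.strong_induction_on with
    | _ n IH =>
      intro u hu hn
      by_cases he : u = v
      · subst he; exact Reachable.refl _
      · obtain ⟨hpA, hlt⟩ := hg.2 u hu he
        have hur : u ≠ R.r := R.ne_root_of_good hg hu he
        have hdp := R.dep_par u hur
        have hadj : (sub T A).coe.Adj ⟨u, by simpa [sub] using hu⟩ ⟨R.par u, by simpa [sub] using hpA⟩ := by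
          simp only [Subgraph.coe_adj]
          exact ⟨R.adj_par u hur, hu, hpA⟩
        exact hadj.reachable.trans (IH (R.dep (R.par u)) (by omega) (R.par u) hpA rfl)
  rw [Subgraph.connected_iff]
  constructor
  · constructor
    intro x y
    obtain ⟨x, hx⟩ := x
    obtain ⟨y, hy⟩ := y
    have hx' : x ∈ A := by simpa [sub] using hx
    have hy' : y ∈ A := by simpa [sub] using hy
    exact (hreach _ x hx' rfl).trans (hreach _ y hy' rfl).symm
  · exact ⟨v, by simpa [sub] using hg.1⟩

lemma sub_edgeSet {v : V} {A : Finset V} (hg : R.Good v A) :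
    (sub T A).edgeSet = ↑((A.erase v).image (fun u => s(u, R.par u))) := by
  ext e
  induction e with
  | _ x y =>
    simp only [Subgraph.mem_edgeSet, Finset.coe_image, Set.mem_image, Finset.mem_coe,
      Finset.mem_erase]
    constructor
    · rintro ⟨hadj, hx, hy⟩
      rcases R.adj_iff _ _ hadj with ⟨h1, h2⟩ | ⟨h1, h2⟩
      · refine ⟨x, ⟨?_, hx⟩, by rw [h2]⟩
        intro h0
        have hdep : R.dep y + 1 = R.dep x := by
          have := R.dep_par x h1; rw [h2] at this; exact this
        by_cases hyv : y = v
        · rw [h0, hyv] at hdep; omega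
        · have h5 := (hg.2 y hy hyv).2
          rw [h0] at hdep
          omega
      · refine ⟨y, ⟨?_, hy⟩, by rw [h2, Sym2.eq_swap]⟩
        intro h0
        have hdep : R.dep x + 1 = R.dep y := by
          have := R.dep_par y h1; rw [h2] at this; exact this
        by_cases hxv : x = v
        · rw [h0, hxv] at hdep; omega
        · have h5 := (hg.2 x hx hxv).2
          rw [h0] at hdep
          omega
    · rintro ⟨u, ⟨hne, huA⟩, he⟩
      have hur : u ≠ R.r := R.ne_root_of_good hg huA hne
      have hpA : R.par u ∈ A := (hg.2 u huA hne).1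
      have hadj : (sub T A).Adj u (R.par u) := ⟨R.adj_par u hur, huA, hpA⟩
      have : s(u, R.par u) ∈ (sub T A).edgeSet := hadj
      rw [he] at this
      exact this

/-- If a walk starting in the cone of `c` avoids the parent of `c`, it stays in the cone. -/
lemma desc_of_walk_avoid {c : V} (hc : c ≠ R.r) :
    ∀ {x y : V} (W : T.Walk x y), R.Desc c x → (∀ z ∈ W.support, z ≠ R.par c) →
      R.Desc c y := by
  intro x y W
  induction W with
  | nil => exact fun h _ => h
  | @cons a b d hadj W' IH =>
    intro hdesc havoid
    apply IH
    · rcases R.adj_iff _ _ hadj with ⟨h1, h2⟩ | ⟨h1, h2⟩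
      · -- par a = b
        by_cases hac : a = c
        · exfalso
          refine havoid b ?_ ?_
          · rw [SimpleGraph.Walk.support_cons]
            exact List.mem_cons_of_mem _ (SimpleGraph.Walk.start_mem_support W')
          · rw [← h2, hac]
        · exact h2 ▸ (R.desc_par hdesc hac).1
      · -- par b = a
        exact R.desc_cons (h2.symm ▸ hdesc) h1
    · intro z hz
      refine havoid z ?_
      rw [SimpleGraph.Walk.support_cons]
      exact List.mem_cons_of_mem _ hz

lemma edge_mem_path_aux {u : V} (hur : u ≠ R.r) :
    ∀ {y : V} (P : T.Walk u y), P.IsPath → y = R.par u → s(u, R.par u) ∈ P.edges := by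
  intro y P
  cases P with
  | nil =>
      intro _ hy
      exfalso
      have := R.dep_par u hur
      rw [← hy] at this
      omega
  | @cons a x b hadj P' =>
      intro hP hy
      subst hy
      rcases R.adj_iff _ _ hadj with ⟨h1, h2⟩ | ⟨h1, h2⟩
      · rw [SimpleGraph.Walk.edges_cons]
        exact List.mem_cons.mpr (Or.inl (by rw [h2]))
      · -- par x = u : contradiction via the cone lemma
        exfalso
        rw [SimpleGraph.Walk.cons_isPath_iff] at hP
        have havoid : ∀ z ∈ P'.support, z ≠ R.par x := by
          intro z hz h0
          rw [h0, h2] at hz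
          exact hP.2 hz
        have hdesc := R.desc_of_walk_avoid h1 P' (R.desc_refl x) havoid
        have hd1 := R.desc_dep_le hdesc
        have hd2 := R.dep_par u hur
        have hd3 := R.dep_par x h1
        rw [h2] at hd3
        omega

/-- A walk in `T` between adjacent `u` and `par u` must use the edge. -/
lemma edge_mem_walk {u : V} (hur : u ≠ R.r) (W : T.Walk u (R.par u)) :
    s(u, R.par u) ∈ W.edges := by
  exact W.edges_bypass_subset (R.edge_mem_path_aux hur W.bypass W.bypass_isPath rfl)

/-- Every connected subgraph of `T` comes from a `Good` set. -/
lemma good_of_connected {S : T.Subgraph} (hS : S.Connected) :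
    ∃ (m : V) (A : Finset V), S.verts = ↑A ∧ R.Good m A ∧
      S.edgeSet = ↑((A.erase m).image (fun u => s(u, R.par u))) := by
  classical
  have hfin : S.verts.Finite := Set.toFinite _
  set A := hfin.toFinset with hA
  have hAv : S.verts = ↑A := (Set.Finite.coe_toFinset hfin).symm
  have hne : A.Nonempty := by
    obtain ⟨v, hv⟩ := hS.nonempty
    exact ⟨v, (Set.Finite.mem_toFinset hfin).mpr hv⟩
  obtain ⟨m, hmA, hmin⟩ := Finset.exists_min_image A R.dep hne
  have hmV : m ∈ S.verts := by rw [hAv]; exact hmA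
  -- walks from u to m inside S
  have hwalk : ∀ u, u ∈ S.verts → ∃ W : T.Walk u m,
      (∀ z ∈ W.support, z ∈ S.verts) ∧ (∀ e ∈ W.edges, e ∈ S.edgeSet) := by
    intro u hu
    obtain ⟨W0⟩ := hS.coe.preconnected ⟨u, hu⟩ ⟨m, hmV⟩
    refine ⟨W0.map S.hom, ?_, ?_⟩
    · intro z hz
      replace hz : z ∈ (W0.map S.hom).support := hz
      rw [SimpleGraph.Walk.support_map] at hz
      obtain ⟨z', _, rfl⟩ := List.mem_map.mp hz
      exact z'.2
    · intro e he
      replace he : e ∈ (W0.map S.hom).edges := he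
      rw [SimpleGraph.Walk.edges_map] at he
      obtain ⟨e', he', rfl⟩ := List.mem_map.mp he
      induction e' with
      | _ a b =>
        have hadj : S.coe.Adj a b := SimpleGraph.Walk.adj_of_mem_edges W0 he'
        have hadj2 : S.Adj ↑a ↑b := by simpa using hadj
        simpa using hadj2
  have hmr : ∀ u, u ∈ A → u ≠ m → u ≠ R.r := by
    intro u hu hne h0
    have h1 : R.dep m ≤ R.dep u := hmin u hu
    rw [h0, R.dep_r] at h1
    have h2 : R.dep m = 0 := by omega
    have h3 := R.eq_root_of_dep_eq_zero h2
    exact hne (by rw [h0, ← h3])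
  -- parent closure
  have hclose : ∀ u, u ∈ A → u ≠ m → R.par u ∈ A ∧ R.dep m < R.dep u := by
    intro u hu hnem
    have hur : u ≠ R.r := hmr u hu hnem
    have huV : u ∈ S.verts := by rw [hAv]; exact hu
    obtain ⟨W, hWs, hWe⟩ := hwalk u huV
    by_cases hpar : R.par u ∈ W.support
    · have hpA : R.par u ∈ A := by
        have := hWs _ hpar
        rw [hAv] at this
        exact this
      have h1 : R.dep m ≤ R.dep (R.par u) := hmin _ hpA
      have h2 := R.dep_par u hur
      exact ⟨hpA, by omega⟩
    · exfalso
      have hdesc := R.desc_of_walk_avoid hur W (R.desc_refl u)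
        (fun z hz h0 => hpar (h0 ▸ hz))
      have h1 := R.desc_dep_le hdesc
      have h2 : R.dep m ≤ R.dep u := hmin u hu
      exact hnem (R.eq_of_desc_of_dep_le hdesc (by omega)).symm
  have hgood : R.Good m A := ⟨hmA, hclose⟩
  refine ⟨m, A, hAv, hgood, ?_⟩
  ext e
  induction e with
  | _ x y =>
    simp only [Subgraph.mem_edgeSet, Finset.coe_image, Set.mem_image, Finset.mem_coe,
      Finset.mem_erase]
    constructor
    · intro hadj
      have hx : x ∈ A := by rw [← Finset.mem_coe, ← hAv]; exact S.edge_vert hadj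
      have hy : y ∈ A := by rw [← Finset.mem_coe, ← hAv]; exact S.edge_vert hadj.symm
      rcases R.adj_iff _ _ (S.adj_sub hadj) with ⟨h1, h2⟩ | ⟨h1, h2⟩
      · refine ⟨x, ⟨?_, hx⟩, by rw [h2]⟩
        intro h0
        have h4 : R.dep m ≤ R.dep y := hmin y hy
        have h5 := R.dep_par x h1
        rw [h2] at h5
        rw [← h0] at h4
        omega
      · refine ⟨y, ⟨?_, hy⟩, by rw [h2, Sym2.eq_swap]⟩
        intro h0
        have h4 : R.dep m ≤ R.dep x := hmin x hx
        have h5 := R.dep_par y h1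
        rw [h2] at h5
        rw [← h0] at h4
        omega
    · rintro ⟨u, ⟨hnem, huA⟩, he⟩
      have hur : u ≠ R.r := hmr u huA hnem
      have hpA : R.par u ∈ A := (hclose u huA hnem).1
      have hpV : R.par u ∈ S.verts := by rw [hAv]; exact hpA
      have huV : u ∈ S.verts := by rw [hAv]; exact huA
      obtain ⟨W0⟩ := hS.coe.preconnected ⟨u, huV⟩ ⟨R.par u, hpV⟩
      have hWs : ∀ e' ∈ (W0.map S.hom).edges, e' ∈ S.edgeSet := by
        intro e' he'
        rw [SimpleGraph.Walk.edges_map] at he'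
        obtain ⟨e'', he'', rfl⟩ := List.mem_map.mp he'
        induction e'' with
        | _ a b => exact SimpleGraph.Walk.adj_of_mem_edges W0 he''
      have hmem := R.edge_mem_walk hur (W0.map S.hom)
      have := hWs _ hmem
      rw [he] at this
      exact this

end Rooted
end TwoColourDiscrAux
namespace TwoColourDiscrAux
namespace Rooted
set_option linter.unusedSectionVars false
set_option linter.unusedVariables false
open SimpleGraph Finset

variable {V : Type*} [Fintype V] [DecidableEq V] {T : SimpleGraph V} (R : Rooted T)

lemma hval_neg (w : V → ℤ) (v : V) : R.hval (fun u => -(w u)) v = - R.gval w v := by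
  suffices h : ∀ n v, Fintype.card V - R.dep v = n →
      R.hval (fun u => -(w u)) v = - R.gval w v by exact h _ v rfl
  intro n
  induction n using Nat.strong_induction_on with
  | _ n IH =>
    intro v hn
    rw [gval_eq, hval_eq, ← Finset.sum_neg_distrib]
    apply Finset.sum_congr rfl
    intro c hc
    rw [IH _ (by subst hn; exact R.dep_child_lt hc) c rfl]
    omega

/-- The balancing lemma: signs can be chosen so that the combined state stays balanced. -/
lemma bal (F : Finset V) (a b l : V → ℤ)
    (h : ∀ c ∈ F, 1 ≤ l c ∧ 0 ≤ a c ∧ 0 ≤ b c ∧ a c + b c ≤ l c ∧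
      a c ≤ (l c)/2 + 1 ∧ b c ≤ (l c)/2 + 1) :
    ∃ ε σ : V → ℤ, (∀ c, ε c = 1 ∨ ε c = -1) ∧ (∀ c, σ c = 1 ∨ σ c = -1) ∧
      (∑ c ∈ F, max 0 ((if σ c = 1 then a c else b c) + ε c)) +
        (∑ c ∈ F, max 0 ((if σ c = 1 then b c else a c) - ε c)) ≤ ∑ c ∈ F, l c ∧
      (∑ c ∈ F, max 0 ((if σ c = 1 then a c else b c) + ε c)) ≤ (∑ c ∈ F, l c)/2 + 1 ∧
      (∑ c ∈ F, max 0 ((if σ c = 1 then b c else a c) - ε c)) ≤ (∑ c ∈ F, l c)/2 + 1 := by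
  classical
  induction F using Finset.induction_on with
  | empty => exact ⟨fun _ => 1, fun _ => 1, fun _ => Or.inl rfl, fun _ => Or.inl rfl, by simp⟩
  | @insert c F hcF IH =>
    obtain ⟨ε, σ, hε, hσ, hAB, hA, hB⟩ := IH (fun c hc => h c (mem_insert_of_mem hc))
    obtain ⟨hl, ha0, hb0, hab, hal, hbl⟩ := h c (mem_insert_self c F)
    set A := ∑ c ∈ F, max 0 ((if σ c = 1 then a c else b c) + ε c) with hAdef
    set B := ∑ c ∈ F, max 0 ((if σ c = 1 then b c else a c) - ε c) with hBdef
    set L := ∑ c ∈ F, l c with hLdef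
    have hL0 : 0 ≤ L := Finset.sum_nonneg fun c hc => by
      have := (h c (mem_insert_of_mem hc)).1; omega
    -- the four options
    have hkey :
        (A + (a c + 1) + (B + max 0 (b c - 1)) ≤ L + l c ∧
          A + (a c + 1) ≤ (L + l c)/2 + 1 ∧ B + max 0 (b c - 1) ≤ (L + l c)/2+1) ∨
        (A + max 0 (a c - 1) + (B + (b c + 1)) ≤ L + l c ∧
          A + max 0 (a c - 1) ≤ (L + l c)/2 + 1 ∧ B + (b c + 1) ≤ (L + l c)/2+1) ∨
        (A + (b c + 1) + (B + max 0 (a c - 1)) ≤ L + l c ∧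
          A + (b c + 1) ≤ (L + l c)/2 + 1 ∧ B + max 0 (a c - 1) ≤ (L + l c)/2+1) ∨
        (A + max 0 (b c - 1) + (B + (a c + 1)) ≤ L + l c ∧
          A + max 0 (b c - 1) ≤ (L + l c)/2 + 1 ∧ B + (a c + 1) ≤ (L + l c)/2+1) := by
      rcases max_choice 0 (a c - 1) with h' | h' <;> rcases max_choice 0 (b c - 1) with h'' | h'' <;>
        rw [h', h''] <;> omega
    have hstep : ∀ (e s : ℤ), e = 1 ∨ e = -1 → s = 1 ∨ s = -1 →
        (A + max 0 ((if s = 1 then a c else b c) + e) + (B + max 0 ((if s = 1 then b c else a c) - e)) ≤ L + l c ∧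
         A + max 0 ((if s = 1 then a c else b c) + e) ≤ (L + l c)/2 + 1 ∧
         B + max 0 ((if s = 1 then b c else a c) - e) ≤ (L + l c)/2 + 1) →
        ∃ ε σ : V → ℤ, (∀ x, ε x = 1 ∨ ε x = -1) ∧ (∀ x, σ x = 1 ∨ σ x = -1) ∧
          (∑ x ∈ insert c F, max 0 ((if σ x = 1 then a x else b x) + ε x)) +
            (∑ x ∈ insert c F, max 0 ((if σ x = 1 then b x else a x) - ε x)) ≤ ∑ x ∈ insert c F, l x ∧
          (∑ x ∈ insert c F, max 0 ((if σ x = 1 then a x else b x) + ε x)) ≤ (∑ x ∈ insert c F, l x)/2 + 1 ∧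
          (∑ x ∈ insert c F, max 0 ((if σ x = 1 then b x else a x) - ε x)) ≤ (∑ x ∈ insert c F, l x)/2 + 1 := by
      intro e s he hs hok
      refine ⟨Function.update ε c e, Function.update σ c s, ?_, ?_, ?_⟩
      · intro x
        by_cases hxc : x = c
        · subst hxc; rw [Function.update_self]; exact he
        · rw [Function.update_of_ne hxc]; exact hε x
      · intro x
        by_cases hxc : x = c
        · subst hxc; rw [Function.update_self]; exact hs
        · rw [Function.update_of_ne hxc]; exact hσ x
      · rw [Finset.sum_insert hcF, Finset.sum_insert hcF, Finset.sum_insert hcF]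
        have hAeq : (∑ x ∈ F, max 0 ((if Function.update σ c s x = 1 then a x else b x)
            + Function.update ε c e x)) = A := by
          apply Finset.sum_congr rfl
          intro x hx
          have hxc : x ≠ c := fun h0 => hcF (h0 ▸ hx)
          rw [Function.update_of_ne hxc, Function.update_of_ne hxc]
        have hBeq : (∑ x ∈ F, max 0 ((if Function.update σ c s x = 1 then b x else a x)
            - Function.update ε c e x)) = B := by
          apply Finset.sum_congr rfl
          intro x hx
          have hxc : x ≠ c := fun h0 => hcF (h0 ▸ hx)
          rw [Function.update_of_ne hxc, Function.update_of_ne hxc]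
        rw [hAeq, hBeq, Function.update_self, Function.update_self]
        obtain ⟨o1, o2, o3⟩ := hok
        refine ⟨by omega, by omega, by omega⟩
    rcases hkey with hk | hk | hk | hk
    · refine hstep 1 1 (Or.inl rfl) (Or.inl rfl) ?_
      have hif1 : (if (1:ℤ) = 1 then a c else b c) = a c := if_pos rfl
      have hif2 : (if (1:ℤ) = 1 then b c else a c) = b c := if_pos rfl
      rw [hif1, hif2, show max (0:ℤ) (a c + 1) = a c + 1 from max_eq_right (by omega)]
      exact hk
    · refine hstep (-1) 1 (Or.inr rfl) (Or.inl rfl) ?_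
      have hif1 : (if (1:ℤ) = 1 then a c else b c) = a c := if_pos rfl
      have hif2 : (if (1:ℤ) = 1 then b c else a c) = b c := if_pos rfl
      rw [hif1, hif2, show a c + (-1) = a c - 1 by ring, show b c - (-1) = b c + 1 by ring,
        show max (0:ℤ) (b c + 1) = b c + 1 from max_eq_right (by omega)]
      exact hk
    · refine hstep 1 (-1) (Or.inl rfl) (Or.inr rfl) ?_
      have hif1 : (if (-1:ℤ) = 1 then a c else b c) = b c := if_neg (by norm_num)
      have hif2 : (if (-1:ℤ) = 1 then b c else a c) = a c := if_neg (by norm_num)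
      rw [hif1, hif2, show max (0:ℤ) (b c + 1) = b c + 1 from max_eq_right (by omega)]
      exact hk
    · refine hstep (-1) (-1) (Or.inr rfl) (Or.inr rfl) ?_
      have hif1 : (if (-1:ℤ) = 1 then a c else b c) = b c := if_neg (by norm_num)
      have hif2 : (if (-1:ℤ) = 1 then b c else a c) = a c := if_neg (by norm_num)
      rw [hif1, hif2, show b c + (-1) = b c - 1 by ring, show a c - (-1) = a c + 1 by ring,
        show max (0:ℤ) (a c + 1) = a c + 1 from max_eq_right (by omega)]
      exact hk

/-- the child of `v` above `u` -/
def cOf (v u : V) : V := R.par^[R.dep u - R.dep v - 1] u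

lemma cOf_eq {v c u : V} (hc : c ∈ R.C v) (h : R.Desc c u) : R.cOf v u = c := by
  unfold cOf
  have hd := R.dep_of_mem_C hc
  have h1 := h.1
  have h2 := h.2
  rw [show R.dep u - R.dep v - 1 = R.dep u - R.dep c by omega]
  exact h2

/-- The invariant for the good colouring. -/
def Inv (w : V → ℤ) (v : V) : Prop :=
  R.gval w v + (- R.hval w v) ≤ (R.lam v : ℤ) ∧
    R.gval w v ≤ ((R.lam v : ℤ))/2 + 1 ∧ (- R.hval w v) ≤ ((R.lam v : ℤ))/2 + 1

lemma child_of_desc {v u : V} (h : R.Desc v u) (hne : u ≠ v) :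
    R.cOf v u ∈ R.C v ∧ R.Desc (R.cOf v u) u := by
  suffices hs : ∀ n u, R.dep u = n → R.Desc v u → u ≠ v →
      R.cOf v u ∈ R.C v ∧ R.Desc (R.cOf v u) u by
    exact hs _ u rfl h hne
  intro n
  induction n using Nat.strong_induction_on with
  | _ n IH =>
    intro u hn hdesc hne
    obtain ⟨hdp, hlt⟩ := R.desc_par hdesc hne
    have hur : u ≠ R.r := by
      intro h0; rw [h0, R.dep_r] at hlt; omega
    have hdpar := R.dep_par u hur
    by_cases hp : R.par u = v
    · have hdv : R.dep v + 1 = R.dep u := by rw [← hp]; exact hdpar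
      have hcu : R.cOf v u = u := by
        unfold cOf
        rw [show R.dep u - R.dep v - 1 = 0 by omega]
        rfl
      rw [hcu]
      exact ⟨R.mem_C.mpr ⟨hur, hp⟩, R.desc_refl u⟩
    · have h2 : R.dep v < R.dep (R.par u) := by
        rcases Nat.lt_or_ge (R.dep v) (R.dep (R.par u)) with h' | h'
        · exact h'
        · exact absurd (R.eq_of_desc_of_dep_le hdp h') hp
      have hstep : R.cOf v u = R.cOf v (R.par u) := by
        unfold cOf
        rw [show R.dep u - R.dep v - 1 = (R.dep (R.par u) - R.dep v - 1) + 1 by omega,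
          Function.iterate_succ_apply]
      obtain ⟨hC, hD⟩ := IH (R.dep (R.par u)) (by omega) (R.par u) rfl hdp hp
      rw [hstep]
      exact ⟨hC, R.desc_cons hD hur⟩

lemma desc_eq_of_C_empty {v u : V} (hCv : R.C v = ∅) (h : R.Desc v u) : u = v := by
  by_contra hne
  have := (R.child_of_desc h hne).1
  rw [hCv] at this
  exact absurd this (Finset.notMem_empty _)

lemma neg_min_eq_max (t : ℤ) : - min 0 t = max 0 (-t) := by
  rcases min_choice 0 t with h | h <;> rcases max_choice 0 (-t) with h' | h' <;> omega

/-- Existence of a balanced colouring below `v`. -/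
lemma exists_balanced (v : V) :
    ∃ w : V → ℤ, (∀ u, w u = 1 ∨ w u = -1) ∧ ∀ u, R.Desc v u → R.Inv w u := by
  suffices hs : ∀ n v, Fintype.card V - R.dep v = n →
      ∃ w : V → ℤ, (∀ u, w u = 1 ∨ w u = -1) ∧ ∀ u, R.Desc v u → R.Inv w u by
    exact hs _ v rfl
  intro n
  induction n using Nat.strong_induction_on with
  | _ n IH =>
    intro v hn
    classical
    by_cases hCv : R.C v = ∅
    · refine ⟨fun _ => 1, fun _ => Or.inl rfl, ?_⟩
      intro u hu
      have huv : u = v := R.desc_eq_of_C_empty hCv hu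
      subst huv
      unfold Inv
      rw [R.gval_of_C_empty _ hCv, R.hval_of_C_empty _ hCv, R.lam_eq, if_pos hCv]
      norm_num
    · have IHc : ∀ c ∈ R.C v, ∃ w : V → ℤ, (∀ u, w u = 1 ∨ w u = -1) ∧
          ∀ u, R.Desc c u → R.Inv w u :=
        fun c hc => IH _ (by subst hn; exact R.dep_child_lt hc) c rfl
      choose W hW1 hW2 using IHc
      let W' : V → (V → ℤ) := fun c => if h : c ∈ R.C v then W c h else fun _ => 1
      have hW'1 : ∀ c u, W' c u = 1 ∨ W' c u = -1 := by
        intro c u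
        simp only [W']
        split
        · exact hW1 _ _ u
        · exact Or.inl rfl
      have hW'2 : ∀ c ∈ R.C v, ∀ u, R.Desc c u → R.Inv (W' c) u := by
        intro c hc
        simp only [W', dif_pos hc]
        exact hW2 c hc
      have hdata : ∀ c ∈ R.C v, 1 ≤ (fun c => (R.lam c : ℤ)) c ∧
          0 ≤ (fun c => R.gval (W' c) c) c ∧ 0 ≤ (fun c => - R.hval (W' c) c) c ∧
          (fun c => R.gval (W' c) c) c + (fun c => - R.hval (W' c) c) c ≤ (fun c => (R.lam c : ℤ)) c ∧
          (fun c => R.gval (W' c) c) c ≤ ((fun c => (R.lam c : ℤ)) c)/2 + 1 ∧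
          (fun c => - R.hval (W' c) c) c ≤ ((fun c => (R.lam c : ℤ)) c)/2 + 1 := by
        intro c hc
        obtain ⟨i1, i2, i3⟩ := hW'2 c hc c (R.desc_refl c)
        have hlam : (1:ℤ) ≤ (R.lam c : ℤ) := by exact_mod_cast R.one_le_lam c
        have hnn := R.gval_nonneg (W' c) c
        have hnp := R.hval_nonpos (W' c) c
        have h3 : (0:ℤ) ≤ - R.hval (W' c) c := by omega
        exact ⟨hlam, hnn, h3, i1, i2, i3⟩
      obtain ⟨ε, σ, hε, hσ, hsum, hA, hB⟩ := bal (R.C v) (fun c => R.gval (W' c) c)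
        (fun c => - R.hval (W' c) c) (fun c => (R.lam c : ℤ)) hdata
      classical
      set w : V → ℤ := fun u => if u ∈ R.C v then ε u
        else σ (R.cOf v u) * W' (R.cOf v u) u with hwdef
      have hwe : ∀ c ∈ R.C v, w c = ε c := by
        intro c hc
        simp only [w, if_pos hc]
      have hwval : ∀ u, w u = 1 ∨ w u = -1 := by
        intro u
        simp only [w]
        split
        · exact hε u
        · rcases hσ (R.cOf v u) with h | h <;> rcases hW'1 (R.cOf v u) u with h' | h' <;>
            rw [h, h'] <;> norm_num
      have hagree : ∀ c ∈ R.C v, ∀ z, R.Desc c z → z ≠ c → w z = σ c * W' c z := by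
        intro c hc z hz hzc
        have hdz : R.dep c < R.dep z := (R.desc_par hz hzc).2
        have hdc := R.dep_of_mem_C hc
        have hznC : z ∉ R.C v := by
          intro h0
          have := R.dep_of_mem_C h0
          omega
        have hcz : R.cOf v z = c := R.cOf_eq hc hz
        simp only [w, if_neg hznC, hcz]
      have hgh : ∀ c ∈ R.C v, R.gval w c = (if σ c = 1 then R.gval (W' c) c else - R.hval (W' c) c) ∧
          (- R.hval w c) = (if σ c = 1 then - R.hval (W' c) c else R.gval (W' c) c) := by
        intro c hc
        rcases hσ c with hs1 | hs1
        · rw [hs1, if_pos rfl, if_pos rfl]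
          have hcongr : ∀ z, R.Desc c z → z ≠ c → w z = W' c z := by
            intro z h1 h2
            rw [hagree c hc z h1 h2, hs1, one_mul]
          constructor
          · exact R.gval_congr w (W' c) c hcongr
          · rw [R.hval_congr w (W' c) c hcongr]
        · rw [hs1, if_neg (by norm_num), if_neg (by norm_num)]
          have hcongr : ∀ z, R.Desc c z → z ≠ c → w z = -(W' c z) := by
            intro z h1 h2
            rw [hagree c hc z h1 h2, hs1]
            ring
          constructor
          · rw [R.gval_congr w (fun z => -(W' c z)) c hcongr, R.gval_neg]
          · rw [R.hval_congr w (fun z => -(W' c z)) c hcongr, R.hval_neg]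
            ring
      have hgv : R.gval w v = ∑ c ∈ R.C v,
          max 0 ((if σ c = 1 then R.gval (W' c) c else - R.hval (W' c) c) + ε c) := by
        rw [gval_eq]
        apply Finset.sum_congr rfl
        intro c hc
        rw [(hgh c hc).1, hwe c hc]
      have hhv : - R.hval w v = ∑ c ∈ R.C v,
          max 0 ((if σ c = 1 then - R.hval (W' c) c else R.gval (W' c) c) - ε c) := by
        rw [hval_eq, ← Finset.sum_neg_distrib]
        apply Finset.sum_congr rfl
        intro c hc
        rw [neg_min_eq_max, hwe c hc]
        have h1 := (hgh c hc).2
        rw [show -(R.hval w c + ε c) = (- R.hval w c) - ε c by ring, h1]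
      have hlv : (R.lam v : ℤ) = ∑ c ∈ R.C v, ((R.lam c : ℤ)) := by
        rw [R.lam_eq, if_neg hCv]
        push_cast
        rfl
      refine ⟨w, hwval, ?_⟩
      intro u hu
      by_cases huv : u = v
      · subst huv
        unfold Inv
        rw [hgv, hhv, hlv]
        exact ⟨hsum, hA, hB⟩
      · obtain ⟨hcC, hcD⟩ := R.child_of_desc hu huv
        set c := R.cOf v u with hcdef
        rcases hσ c with hs1 | hs1
        · have hcongr : ∀ z, R.Desc u z → z ≠ u → w z = W' c z := by
            intro z h1 h2
            have hz : R.Desc c z := R.desc_trans hcD h1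
            have hzc : z ≠ c := by
              intro h0
              have d2 := R.desc_dep_le h1
              have d1 := R.desc_dep_le hcD
              have := R.eq_of_desc_of_dep_le h1 (by rw [h0] at d2 ⊢; omega)
              exact h2 this
            rw [hagree c hcC z hz hzc, hs1, one_mul]
          obtain ⟨i1, i2, i3⟩ := hW'2 c hcC u hcD
          unfold Inv
          rw [R.gval_congr w (W' c) u hcongr, R.hval_congr w (W' c) u hcongr]
          exact ⟨i1, i2, i3⟩
        · have hcongr : ∀ z, R.Desc u z → z ≠ u → w z = -(W' c z) := by
            intro z h1 h2
            have hz : R.Desc c z := R.desc_trans hcD h1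
            have hzc : z ≠ c := by
              intro h0
              have d2 := R.desc_dep_le h1
              have d1 := R.desc_dep_le hcD
              have := R.eq_of_desc_of_dep_le h1 (by rw [h0] at d2 ⊢; omega)
              exact h2 this
            rw [hagree c hcC z hz hzc, hs1]
            ring
          obtain ⟨i1, i2, i3⟩ := hW'2 c hcC u hcD
          unfold Inv
          rw [R.gval_congr w (fun z => -(W' c z)) u hcongr,
            R.hval_congr w (fun z => -(W' c z)) u hcongr, R.gval_neg, R.hval_neg]
          refine ⟨by omega, by omega, by omega⟩

end Rooted
end TwoColourDiscrAux
namespace TwoColourDiscrAux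
namespace Rooted
set_option linter.unusedSectionVars false
set_option linter.unusedVariables false
open SimpleGraph Finset

variable {V : Type*} [Fintype V] [DecidableEq V] {T : SimpleGraph V} (R : Rooted T)

lemma desc_root : ∀ u, R.Desc R.r u := by
  suffices h : ∀ n u, R.dep u = n → R.Desc R.r u by exact fun u => h _ u rfl
  intro n
  induction n using Nat.strong_induction_on with
  | _ n IH =>
    intro u hn
    by_cases hu : u = R.r
    · subst hu; exact R.desc_refl _
    · have hdp := R.dep_par u hu
      exact R.desc_cons (IH (R.dep (R.par u)) (by omega) _ rfl) hu

section DegreeCount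
variable [DecidableRel T.Adj]

lemma lam_card {v : V} (hv : v ≠ R.r) :
    R.lam v = (univ.filter (fun u => R.Desc v u ∧ T.degree u = 1)).card := by
  suffices hs : ∀ n v, Fintype.card V - R.dep v = n → v ≠ R.r →
      R.lam v = (univ.filter (fun u => R.Desc v u ∧ T.degree u = 1)).card by
    exact hs _ v rfl hv
  intro n
  induction n using Nat.strong_induction_on with
  | _ n IH =>
    intro v hn hv
    by_cases hC : R.C v = ∅
    · have hdeg : T.degree v = 1 := by
        rw [R.degree_nonroot hv, hC]
        simp
      have hfil : (univ.filter (fun u => R.Desc v u ∧ T.degree u = 1)) = {v} := by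
        ext u
        simp only [mem_filter, mem_univ, true_and, mem_singleton]
        constructor
        · rintro ⟨h1, _⟩
          exact R.desc_eq_of_C_empty hC h1
        · intro h0
          rw [h0]
          exact ⟨R.desc_refl v, hdeg⟩
      rw [R.lam_eq, if_pos hC, hfil, Finset.card_singleton]
    · have hbu : (univ.filter (fun u => R.Desc v u ∧ T.degree u = 1)) =
          (R.C v).biUnion (fun c => univ.filter (fun u => R.Desc c u ∧ T.degree u = 1)) := by
        ext u
        simp only [mem_filter, mem_univ, true_and, mem_biUnion]
        constructor
        · rintro ⟨h1, h2⟩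
          have huv : u ≠ v := by
            intro h0
            subst h0
            rw [R.degree_nonroot hv] at h2
            have : (R.C u).Nonempty := Finset.nonempty_iff_ne_empty.mpr hC
            have := Finset.card_pos.mpr this
            omega
          obtain ⟨hc1, hc2⟩ := R.child_of_desc h1 huv
          exact ⟨R.cOf v u, hc1, hc2, h2⟩
        · rintro ⟨c, hc, h1, h2⟩
          exact ⟨R.desc_child_extend hc h1, h2⟩
      rw [R.lam_eq, if_neg hC, hbu, Finset.card_biUnion]
      · apply Finset.sum_congr rfl
        intro c hc
        have hcr : c ≠ R.r := (R.mem_C.mp hc).1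
        exact IH _ (by subst hn; exact R.dep_child_lt hc) c rfl hcr
      · intro c hc c' hc' hne
        rw [Function.onFun, Finset.disjoint_left]
        intro u hu hu'
        rw [mem_filter] at hu hu'
        exact hne (R.desc_unique hu.2.1 hu'.2.1
          (by rw [R.dep_of_mem_C hc, R.dep_of_mem_C hc']))

/-- When the root is a leaf with unique child `c₀`, the number of leaves is `lam c₀ + 1`. -/
lemma leaf_count {c₀ : V} (hdeg : T.degree R.r = 1) (hCr : R.C R.r = {c₀}) :
    (univ.filter (fun u => T.degree u = 1)).card = R.lam c₀ + 1 := by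
  have hc0 : c₀ ∈ R.C R.r := by rw [hCr]; exact Finset.mem_singleton_self c₀
  have hc0r : c₀ ≠ R.r := (R.mem_C.mp hc0).1
  have hins : (univ.filter (fun u => T.degree u = 1)) =
      insert R.r (univ.filter (fun u => R.Desc c₀ u ∧ T.degree u = 1)) := by
    ext u
    simp only [mem_filter, mem_univ, true_and, mem_insert]
    constructor
    · intro h1
      by_cases hur : u = R.r
      · exact Or.inl hur
      · refine Or.inr ⟨?_, h1⟩
        obtain ⟨hc1, hc2⟩ := R.child_of_desc (R.desc_root u) hur
        rw [hCr, Finset.mem_singleton] at hc1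
        rw [← hc1]
        exact hc2
    · rintro (rfl | ⟨h1, h2⟩)
      · exact hdeg
      · exact h2
  have hnotmem : R.r ∉ (univ.filter (fun u => R.Desc c₀ u ∧ T.degree u = 1)) := by
    rw [mem_filter]
    rintro ⟨-, h1, -⟩
    have h2 := R.desc_dep_le h1
    have h3 := R.dep_pos hc0r
    rw [R.dep_r] at h2
    omega
  rw [hins, Finset.card_insert_of_notMem hnotmem, R.lam_card hc0r]

end DegreeCount
end Rooted
end TwoColourDiscrAux
namespace TwoColourDiscrAux
namespace Rooted
set_option linter.unusedSectionVars false
set_option linter.unusedVariables false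
open SimpleGraph Finset

variable {V : Type*} [Fintype V] [DecidableEq V] {T : SimpleGraph V} (R : Rooted T)

lemma fin_two (x : Fin 2) : x = 0 ∨ x = 1 := by omega

lemma imbalance_eq (f : Sym2 V → Fin 2) (w : V → ℤ)
    (hrel : ∀ u, u ≠ R.r → w u = (if f s(u, R.par u) = 0 then (1:ℤ) else -1))
    {S : T.Subgraph} {m : V} {A : Finset V}
    (hedges : S.edgeSet = ↑((A.erase m).image (fun u => s(u, R.par u))))
    (hner : ∀ u ∈ A.erase m, u ≠ R.r) (j : Fin 2) :
    (2 : ℤ) * ({e ∈ S.edgeSet | f e = j} : Set (Sym2 V)).ncard - (S.edgeSet.ncard : ℤ)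
      = (if j = 0 then 1 else -1) * ∑ u ∈ A.erase m, w u := by
  classical
  set E : Finset (Sym2 V) := (A.erase m).image (fun u => s(u, R.par u)) with hE
  have hset : ({e ∈ S.edgeSet | f e = j} : Set (Sym2 V)) = ↑(E.filter (fun e => f e = j)) := by
    ext e
    simp only [Set.mem_setOf_eq, Finset.coe_filter, hedges]
    constructor
    · rintro ⟨h1, h2⟩; exact ⟨by exact_mod_cast h1, h2⟩
    · rintro ⟨h1, h2⟩; exact ⟨by exact_mod_cast h1, h2⟩
  have hn1 : ({e ∈ S.edgeSet | f e = j} : Set (Sym2 V)).ncard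
      = (E.filter (fun e => f e = j)).card := by
    rw [hset, Set.ncard_coe_finset]
  have hn2 : S.edgeSet.ncard = E.card := by
    rw [hedges, Set.ncard_coe_finset]
  rw [hn1, hn2]
  -- sum of ±1 over E
  have hsum : ∑ e ∈ E, (if f e = j then (1:ℤ) else -1)
      = 2 * (E.filter (fun e => f e = j)).card - E.card := by
    rw [Finset.sum_ite, Finset.sum_const, Finset.sum_const,
      ← Finset.card_filter_add_card_filter_not (s := E) (p := fun e => f e = j)]
    push_cast
    ring
  -- rewrite as sum over vertices
  have hinj : Set.InjOn (fun u => s(u, R.par u)) ↑(A.erase m) := by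
    intro u hu u' hu' heq
    exact R.parentEdge_inj (hner u (by exact_mod_cast hu)) (hner u' (by exact_mod_cast hu')) heq
  have himg : ∑ e ∈ E, (if f e = j then (1:ℤ) else -1)
      = ∑ u ∈ A.erase m, (if f s(u, R.par u) = j then (1:ℤ) else -1) := by
    rw [hE, Finset.sum_image (fun u hu u' hu' h => hinj (by exact_mod_cast hu) (by exact_mod_cast hu') h)]
  have hterm : ∀ u ∈ A.erase m, (if f s(u, R.par u) = j then (1:ℤ) else -1)
      = (if j = 0 then 1 else -1) * w u := by
    intro u hu
    rw [hrel u (hner u hu)]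
    rcases fin_two j with hj | hj <;> rcases fin_two (f s(u, R.par u)) with hf | hf <;>
      subst hj <;> rw [hf] <;> norm_num
  rw [← hsum, himg, Finset.mul_sum]
  exact Finset.sum_congr rfl hterm

end Rooted
end TwoColourDiscrAux

open SimpleGraph

/-- **Two-colour discrepancy of subtrees of a tree.**
For every finite tree `T` with `ℓ` leaves, the 2-colour discrepancy of the family of all
subtrees of `T` equals `⌈ℓ/2⌉`: there is a 2-colouring all of whose subtrees have all colour
imbalances at most `⌈ℓ/2⌉`, and every 2-colouring admits a subtree and a colour with
imbalance at least `⌈ℓ/2⌉`. -/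
theorem two_colour_discrepancy_eq
    {V : Type*} [Fintype V] (T : SimpleGraph V) [DecidableRel T.Adj]
    (hT : T.IsTree) (ℓ : ℕ)
    (hℓ : ℓ = ({v : V | T.degree v = 1} : Set V).ncard) :
    (∃ f : Sym2 V → Fin 2, ∀ S : T.Subgraph, S.Connected → ∀ j : Fin 2,
      (2 : ℤ) * ({e ∈ S.edgeSet | f e = j} : Set (Sym2 V)).ncard
          - (S.edgeSet.ncard : ℤ) ≤ (⌈(ℓ : ℚ) / 2⌉ : ℤ)) ∧
    (∀ f : Sym2 V → Fin 2, ∃ S : T.Subgraph, S.Connected ∧ ∃ j : Fin 2,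
      (⌈(ℓ : ℚ) / 2⌉ : ℤ) ≤
        (2 : ℤ) * ({e ∈ S.edgeSet | f e = j} : Set (Sym2 V)).ncard
          - (S.edgeSet.ncard : ℤ)) := by
  classical
  open TwoColourDiscrAux TwoColourDiscrAux.Rooted in
  letI : DecidableEq V := Classical.decEq V
  have hp1 : (ℓ:ℤ) ≤ 2 * ⌈(ℓ:ℚ)/2⌉ := by
    have h := Int.le_ceil ((ℓ:ℚ)/2)
    have h2 : (ℓ:ℚ) ≤ 2 * ((⌈(ℓ:ℚ)/2⌉ : ℤ) : ℚ) := by linarith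
    exact_mod_cast h2
  have hp2 : 2 * ⌈(ℓ:ℚ)/2⌉ ≤ (ℓ:ℤ) + 1 := by
    have h1 : (ℓ:ℤ) ≤ 2 * (((ℓ:ℤ)+1)/2) := by omega
    have h2 : ((ℓ:ℚ)) ≤ 2 * (((((ℓ:ℤ)+1)/2 : ℤ)) : ℚ) := by exact_mod_cast h1
    have hz : ((ℓ:ℚ))/2 ≤ ((((ℓ:ℤ)+1)/2 : ℤ) : ℚ) := by linarith
    have := Int.ceil_le.mpr hz
    omega
  set p : ℤ := ⌈(ℓ:ℚ)/2⌉ with hpdef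
  rcases le_or_gt (Fintype.card V) 1 with hcard | hcard
  · -- at most one vertex
    have hsing : ∀ x y : V, x = y := fun x y => Fintype.card_le_one_iff.mp hcard x y
    have hnoadj : ∀ S : T.Subgraph, S.edgeSet = ∅ := by
      intro S
      ext e
      induction e with
      | _ x y =>
        simp only [Subgraph.mem_edgeSet, Set.mem_empty_iff_false, iff_false]
        intro h
        exact (S.adj_sub h).ne (hsing x y)
    have hl0 : ℓ = 0 := by
      rw [hℓ]
      have : {v : V | T.degree v = 1} = ∅ := by
        ext v
        simp only [Set.mem_setOf_eq, Set.mem_empty_iff_false, iff_false]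
        intro h
        have hpos : 0 < T.degree v := by omega
        rw [← SimpleGraph.card_neighborFinset_eq_degree] at hpos
        obtain ⟨u, hu⟩ := Finset.card_pos.mp hpos
        rw [SimpleGraph.mem_neighborFinset] at hu
        exact hu.ne (hsing v u)
      rw [this, Set.ncard_empty]
    have hp0 : p = 0 := by
      rw [hl0] at hp1 hp2
      simp only [Nat.cast_zero] at hp1 hp2
      omega
    constructor
    · refine ⟨fun _ => 0, ?_⟩
      intro S _ j
      rw [hnoadj S]
      have h1 : ({e ∈ (∅ : Set (Sym2 V)) | (fun _ => (0 : Fin 2)) e = j}) = ∅ := by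
        ext e; simp
      rw [h1]
      simp [hp0]
    · intro f
      obtain ⟨v⟩ := hT.isConnected.nonempty
      refine ⟨SimpleGraph.singletonSubgraph T v,
        SimpleGraph.Subgraph.singletonSubgraph_connected, 0, ?_⟩
      rw [hnoadj _]
      have h1 : ({e ∈ (∅ : Set (Sym2 V)) | f e = 0}) = ∅ := by ext e; simp
      rw [h1]
      simp [hp0]
  · -- at least two vertices
    have hne : Nonempty V := hT.isConnected.nonempty
    obtain ⟨R0, hR0⟩ := TwoColourDiscrAux.exists_rooted hT (Classical.arbitrary V)
    obtain ⟨v1, hv1r, hv1deg⟩ := R0.exists_leaf hcard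
    obtain ⟨R, hRr⟩ := TwoColourDiscrAux.exists_rooted hT v1
    have hdeg : T.degree R.r = 1 := by rw [hRr]; exact hv1deg
    have hCr1 : (R.C R.r).card = 1 := by rw [← R.degree_root]; exact hdeg
    obtain ⟨c₀, hCr⟩ := Finset.card_eq_one.mp hCr1
    have hc0 : c₀ ∈ R.C R.r := by rw [hCr]; exact Finset.mem_singleton_self _
    have hc0r : c₀ ≠ R.r := (R.mem_C.mp hc0).1
    have hleaf := R.leaf_count hdeg hCr
    have hlcard : ℓ = R.lam c₀ + 1 := by
      rw [hℓ, ← hleaf]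
      rw [show {v : V | T.degree v = 1} =
          ↑(Finset.univ.filter (fun u => T.degree u = 1)) by ext u; simp]
      rw [Set.ncard_coe_finset]
    have hlam1 : 1 ≤ R.lam c₀ := R.one_le_lam c₀
    have hlamZ : (R.lam c₀ : ℤ) = (ℓ:ℤ) - 1 := by omega
    have hl2 : 2 ≤ ℓ := by omega
    have hdesc_all : ∀ m : V, m ≠ R.r → R.Desc c₀ m := by
      intro m hm
      obtain ⟨hc1, hc2⟩ := R.child_of_desc (R.desc_root m) hm
      rw [hCr, Finset.mem_singleton] at hc1
      rw [← hc1]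
      exact hc2
    constructor
    · -- Part 1: the balanced colouring
      obtain ⟨w, hwval, hwinv⟩ := R.exists_balanced c₀
      obtain ⟨i1, i2, i3⟩ := hwinv c₀ (R.desc_refl c₀)
      obtain ⟨ε₀, hε₀val, hεa, hεb⟩ : ∃ e : ℤ, (e = 1 ∨ e = -1) ∧
          R.gval w c₀ + e ≤ p ∧ (- R.hval w c₀) - e ≤ p := by
        have hg0 := R.gval_nonneg w c₀
        have hh0 := R.hval_nonpos w c₀
        rcases le_or_gt (- R.hval w c₀) (R.gval w c₀) with h | h
        · exact ⟨-1, Or.inr rfl, by omega, by omega⟩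
        · exact ⟨1, Or.inl rfl, by omega, by omega⟩
      set wf : V → ℤ := Function.update w c₀ ε₀ with hwf
      have hwfc : wf c₀ = ε₀ := by rw [hwf]; exact Function.update_self _ _ _
      have hwfval : ∀ u, wf u = 1 ∨ wf u = -1 := by
        intro u
        by_cases h : u = c₀
        · subst h; rw [hwfc]; exact hε₀val
        · rw [hwf, Function.update_of_ne h]; exact hwval u
      have hagree : ∀ u, R.Desc c₀ u → ∀ z, R.Desc u z → z ≠ u → wf z = w z := by
        intro u hu z hz hnz
        have hzc : z ≠ c₀ := by
          intro h0
          have d1 := R.desc_dep_le hu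
          have d2 := R.desc_dep_le hz
          have hu' : u = c₀ := R.eq_of_desc_of_dep_le hu (by rw [h0] at d2; omega)
          exact hnz (by rw [h0, hu'])
        rw [hwf, Function.update_of_ne hzc]
      have hgwf : ∀ u, R.Desc c₀ u → R.gval wf u = R.gval w u ∧ R.hval wf u = R.hval w u :=
        fun u hu => ⟨R.gval_congr _ _ u (fun z h1 h2 => hagree u hu z h1 h2),
          R.hval_congr _ _ u (fun z h1 h2 => hagree u hu z h1 h2)⟩
      have hbound : ∀ m : V, R.gval wf m ≤ p ∧ - R.hval wf m ≤ p := by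
        intro m
        by_cases hm : m = R.r
        · subst hm
          have hgr : R.gval wf R.r = max 0 (R.gval wf c₀ + wf c₀) := by
            rw [TwoColourDiscrAux.Rooted.gval_eq, hCr, Finset.sum_singleton]
          have hhr : R.hval wf R.r = min 0 (R.hval wf c₀ + wf c₀) := by
            rw [TwoColourDiscrAux.Rooted.hval_eq, hCr, Finset.sum_singleton]
          have hg0 := (hgwf c₀ (R.desc_refl c₀)).1
          have hh0 := (hgwf c₀ (R.desc_refl c₀)).2
          rw [hgr, hhr, hwfc, hg0, hh0]
          constructor
          · rcases max_choice 0 (R.gval w c₀ + ε₀) with h | h <;> rw [h] <;> omega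
          · rcases min_choice 0 (R.hval w c₀ + ε₀) with h | h <;> rw [h] <;> omega
        · have hd := hdesc_all m hm
          obtain ⟨j1, j2, j3⟩ := hwinv m hd
          have hlm : (R.lam m : ℤ) ≤ (R.lam c₀ : ℤ) := by exact_mod_cast R.lam_mono hd
          obtain ⟨e1, e2⟩ := hgwf m hd
          rw [e1, e2]
          omega
      refine ⟨fun e => if h : ∃ u, u ≠ R.r ∧ e = s(u, R.par u) ∧ wf u = 1 then 0 else 1, ?_⟩
      set f : Sym2 V → Fin 2 :=
        fun e => if h : ∃ u, u ≠ R.r ∧ e = s(u, R.par u) ∧ wf u = 1 then 0 else 1 with hf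
      have hrel : ∀ u, u ≠ R.r → wf u = (if f s(u, R.par u) = 0 then (1:ℤ) else -1) := by
        intro u hur
        rcases hwfval u with h | h
        · rw [h]
          have : f s(u, R.par u) = 0 := by
            rw [hf]
            exact dif_pos ⟨u, hur, rfl, h⟩
          rw [if_pos this]
        · have : f s(u, R.par u) = 1 := by
            rw [hf]
            apply dif_neg
            rintro ⟨u', hu'r, he, hw1⟩
            have : u = u' := R.parentEdge_inj hur hu'r he
            rw [← this] at hw1
            omega
          rw [h, this, if_neg (by decide)]
      intro S hS j
      obtain ⟨m, A, hverts, hgood, hedges⟩ := R.good_of_connected hS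
      have hner : ∀ u ∈ A.erase m, u ≠ R.r := fun u hu =>
        R.ne_root_of_good hgood (Finset.mem_of_mem_erase hu) (Finset.ne_of_mem_erase hu)
      rw [R.imbalance_eq f wf hrel hedges hner j]
      have hsle := R.sum_le_gval wf hgood
      have hsge := R.hval_le_sum wf hgood
      obtain ⟨hb1, hb2⟩ := hbound m
      rcases TwoColourDiscrAux.Rooted.fin_two j with hj | hj
      · rw [hj, if_pos rfl, one_mul]; omega
      · rw [hj, if_neg (by decide)]; omega
    · -- Part 2: the lower bound
      intro f
      set w : V → ℤ := fun u => if f s(u, R.par u) = 0 then 1 else -1 with hw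
      have hwval : ∀ u, w u = 1 ∨ w u = -1 := by
        intro u
        rw [hw]
        dsimp only
        split
        · exact Or.inl rfl
        · exact Or.inr rfl
      have hrel : ∀ u, u ≠ R.r → w u = (if f s(u, R.par u) = 0 then (1:ℤ) else -1) :=
        fun u _ => rfl
      have hgr : R.gval w R.r = max 0 (R.gval w c₀ + w c₀) := by
        rw [TwoColourDiscrAux.Rooted.gval_eq, hCr, Finset.sum_singleton]
      have hhr : R.hval w R.r = min 0 (R.hval w c₀ + w c₀) := by
        rw [TwoColourDiscrAux.Rooted.hval_eq, hCr, Finset.sum_singleton]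
      have hg0 := R.gval_nonneg w c₀
      have hh0 := R.hval_nonpos w c₀
      have hsum : (R.gval w c₀) + (- R.hval w c₀) ≥ (ℓ:ℤ) - 1 ∨
          (R.gval w c₀ = 0 ∧ R.hval w c₀ = 0 ∧ (ℓ:ℤ) = 2) := by
        by_cases hCc : R.C c₀ = ∅
        · refine Or.inr ⟨R.gval_of_C_empty w hCc, R.hval_of_C_empty w hCc, ?_⟩
          have : R.lam c₀ = 1 := by rw [R.lam_eq, if_pos hCc]
          omega
        · left
          have := R.lam_le_gval_sub_hval w hwval c₀ hCc
          omega
      have hmain : p ≤ R.gval w R.r ∨ p ≤ - R.hval w R.r ∨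
          p ≤ R.gval w c₀ ∨ p ≤ - R.hval w c₀ := by
        rcases max_choice 0 (R.gval w c₀ + w c₀) with h1 | h1 <;>
          rcases min_choice 0 (R.hval w c₀ + w c₀) with h2 | h2 <;>
            rcases hwval c₀ with h3 | h3 <;>
              rw [h3] at h1 h2 <;> rw [hgr, hhr, h3, h1, h2] <;> omega
      have hfinish : ∀ (v : V) (A : Finset V), R.Good v A →
          ((p ≤ ∑ u ∈ A.erase v, w u) ∨ (∑ u ∈ A.erase v, w u ≤ -p)) →
          ∃ S : T.Subgraph, S.Connected ∧ ∃ j : Fin 2,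
            p ≤ (2 : ℤ) * ({e ∈ S.edgeSet | f e = j} : Set (Sym2 V)).ncard
              - (S.edgeSet.ncard : ℤ) := by
        intro v A hg hs
        have hner : ∀ u ∈ A.erase v, u ≠ R.r := fun u hu =>
          R.ne_root_of_good hg (Finset.mem_of_mem_erase hu) (Finset.ne_of_mem_erase hu)
        refine ⟨TwoColourDiscrAux.sub T A, R.sub_connected hg, ?_⟩
        rcases hs with hs | hs
        · refine ⟨0, ?_⟩
          rw [R.imbalance_eq f w hrel (R.sub_edgeSet hg) hner 0, if_pos rfl, one_mul]
          exact hs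
        · refine ⟨1, ?_⟩
          rw [R.imbalance_eq f w hrel (R.sub_edgeSet hg) hner 1, if_neg (by decide)]
          omega
      rcases hmain with hm | hm | hm | hm
      · obtain ⟨A, hgA, hsA⟩ := R.exists_good_gval w R.r
        exact hfinish R.r A hgA (Or.inl (by omega))
      · obtain ⟨A, hgA, hsA⟩ := R.exists_good_hval w R.r
        exact hfinish R.r A hgA (Or.inr (by omega))
      · obtain ⟨A, hgA, hsA⟩ := R.exists_good_gval w c₀
        exact hfinish c₀ A hgA (Or.inl (by omega))
      · obtain ⟨A, hgA, hsA⟩ := R.exists_good_hval w c₀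
        exact hfinish c₀ A hgA (Or.inr (by omega))
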